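/- Let T ⊆ ℝ² be the convex hull of a finite set X of points (a polytope). If T intersects the set P = {(x,y) : x > c ∧ y ≥ d}, then there exist two points p, q ∈ X and coefficients α, β ≥ 0 with α + β = 1 such that α·p + β·q ∈ P. -/
import Mathlib


theorem polytope_inter_halfspaces_two_points
    (c d : ℝ) (X : Finset (ℝ × ℝ))
    (h : ∃ z ∈ convexHull ℝ (X : Set (ℝ × ℝ)), c < z.1 ∧ d ≤ z.2) :
    ∃ p ∈ X, ∃ q ∈ X, ∃ α β : ℝ, 0 ≤ α ∧ 0 ≤ β ∧ α + β = 1 ∧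
      c < (α • p + β • q).1 ∧ d ≤ (α • p + β • q).2 := by
  obtain ⟨z, hz, hz1, hz2⟩ := h
  rw [Finset.mem_convexHull] at hz
  obtain ⟨w, hw0, hw1, hwz⟩ := hz
  rw [Finset.centerMass_eq_of_sum_1 _ _ hw1] at hwz
  by_contra hc
  push_neg at hc
  -- every point of X with y ≥ d has x ≤ c
  have hA : ∀ a ∈ X, d ≤ a.2 → a.1 ≤ c := by
    intro a ha hda
    by_contra hac
    push_neg at hac
    have := hc a ha a ha 1 0 zero_le_one le_rfl (by norm_num)
    simp only [one_smul, zero_smul, add_zero] at this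
    exact absurd (this hac) (not_lt.2 hda)
  -- for every pair, the crossing point with y = d has x ≤ c
  have hAB : ∀ a ∈ X, ∀ b ∈ X, d ≤ a.2 → b.2 < d →
      (d - b.2) * a.1 + (a.2 - d) * b.1 ≤ c * (a.2 - b.2) := by
    intro a ha b hb hda hbd
    have ht : 0 < a.2 - b.2 := by linarith
    have hlam0 : 0 ≤ (d - b.2) / (a.2 - b.2) := div_nonneg (by linarith) ht.le
    have hlam1 : (d - b.2) / (a.2 - b.2) ≤ 1 := by rw [div_le_one ht]; linarith
    have hsum : (d - b.2) / (a.2 - b.2) + (1 - (d - b.2) / (a.2 - b.2)) = 1 := by ring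
    have hx := hc a ha b hb ((d - b.2) / (a.2 - b.2)) (1 - (d - b.2) / (a.2 - b.2))
      hlam0 (by linarith) hsum
    simp only [Prod.fst_add, Prod.snd_add, Prod.smul_fst, Prod.smul_snd, smul_eq_mul] at hx
    have hy : (d - b.2) / (a.2 - b.2) * a.2 + (1 - (d - b.2) / (a.2 - b.2)) * b.2 = d := by
      field_simp
      try ring
    rw [hy] at hx
    have hxle : (d - b.2) / (a.2 - b.2) * a.1 + (1 - (d - b.2) / (a.2 - b.2)) * b.1 ≤ c := by
      by_contra hgt
      push_neg at hgt
      exact absurd (hx hgt) (lt_irrefl d)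
    have hmul := mul_le_mul_of_nonneg_right hxle ht.le
    have hne : a.2 - b.2 ≠ 0 := ne_of_gt ht
    calc (d - b.2) * a.1 + (a.2 - d) * b.1
        = ((d - b.2) / (a.2 - b.2) * a.1 + (1 - (d - b.2) / (a.2 - b.2)) * b.1) * (a.2 - b.2) := by
          field_simp
          try ring
      _ ≤ c * (a.2 - b.2) := hmul
  classical
  set A := X.filter (fun x => d ≤ x.2) with hAdef
  set B := X.filter (fun x => ¬ d ≤ x.2) with hBdef
  have hmemA : ∀ a ∈ A, a ∈ X ∧ d ≤ a.2 := fun a ha => Finset.mem_filter.1 ha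
  have hmemB : ∀ b ∈ B, b ∈ X ∧ b.2 < d := by
    intro b hb
    obtain ⟨h1, h2⟩ := Finset.mem_filter.1 hb
    exact ⟨h1, lt_of_not_ge h2⟩
  set Pt := ∑ a ∈ A, w a with hPt
  set Q := ∑ b ∈ B, w b with hQ
  set XA := ∑ a ∈ A, w a * a.1 with hXA
  set XB := ∑ b ∈ B, w b * b.1 with hXB
  set Sp := ∑ a ∈ A, w a * (a.2 - d) with hSp
  set Sq := ∑ b ∈ B, w b * (d - b.2) with hSq
  have hsplit : ∀ f : ℝ × ℝ → ℝ, (∑ x ∈ A, f x) + (∑ x ∈ B, f x) = ∑ x ∈ X, f x :=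
    fun f => Finset.sum_filter_add_sum_filter_not X _ f
  have hPQ : Pt + Q = 1 := by rw [hPt, hQ, hsplit]; exact hw1
  have hz1' : XA + XB = z.1 := by
    rw [hXA, hXB, hsplit]
    rw [← hwz, Prod.fst_sum]
    exact Finset.sum_congr rfl (fun x _ => rfl)
  have hz2' : Sp - Sq = z.2 - d := by
    have : Sp + (∑ b ∈ B, w b * (b.2 - d)) = ∑ x ∈ X, w x * (x.2 - d) := by
      rw [hSp, hsplit]
    have hBneg : (∑ b ∈ B, w b * (b.2 - d)) = -Sq := by
      rw [hSq, ← Finset.sum_neg_distrib]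
      exact Finset.sum_congr rfl (fun b _ => by ring)
    have hXsum : ∑ x ∈ X, w x * (x.2 - d) = z.2 - d := by
      have : ∑ x ∈ X, w x * (x.2 - d) = (∑ x ∈ X, w x * x.2) - d * ∑ x ∈ X, w x := by
        rw [Finset.mul_sum, ← Finset.sum_sub_distrib]
        exact Finset.sum_congr rfl (fun x _ => by ring)
      rw [this, hw1, mul_one]
      have : (∑ x ∈ X, w x * x.2) = z.2 := by
        rw [← hwz, Prod.snd_sum]
        exact Finset.sum_congr rfl (fun x _ => rfl)
      rw [this]
    rw [hBneg] at this
    linarith [this, hXsum]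
  have hSq0 : 0 ≤ Sq := Finset.sum_nonneg (fun b hb => by
    obtain ⟨hbX, hbd⟩ := hmemB b hb
    exact mul_nonneg (hw0 b hbX) (by linarith))
  have hXAle : XA ≤ c * Pt := by
    rw [hXA, hPt, Finset.mul_sum]
    apply Finset.sum_le_sum
    intro a ha
    obtain ⟨haX, hda⟩ := hmemA a ha
    calc w a * a.1 ≤ w a * c := mul_le_mul_of_nonneg_left (hA a haX hda) (hw0 a haX)
      _ = c * w a := mul_comm _ _
  rcases eq_or_lt_of_le hSq0 with hSqz | hSqpos
  · -- Sq = 0 : all weights on B vanish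
    have hwB : ∀ b ∈ B, w b = 0 := by
      intro b hb
      obtain ⟨hbX, hbd⟩ := hmemB b hb
      have hall := (Finset.sum_eq_zero_iff_of_nonneg (fun b hb => by
        obtain ⟨hbX, hbd⟩ := hmemB b hb
        exact mul_nonneg (hw0 b hbX) (by linarith : (0:ℝ) ≤ d - b.2))).1 hSqz.symm
      have := hall b hb
      have hpos : (0:ℝ) < d - b.2 := by linarith
      rcases mul_eq_zero.1 this with h | h
      · exact h
      · exact absurd h (ne_of_gt hpos)
    have hXB0 : XB = 0 := Finset.sum_eq_zero (fun b hb => by rw [hwB b hb, zero_mul])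
    have hQ0 : Q = 0 := Finset.sum_eq_zero hwB
    have : z.1 ≤ c := by
      rw [← hz1', hXB0, add_zero]
      calc XA ≤ c * Pt := hXAle
        _ = c := by rw [show Pt = 1 by linarith [hPQ, hQ0], mul_one]
    linarith
  · -- Sq > 0
    have hSpSq : Sq ≤ Sp := by linarith [hz2']
    have hSppos : 0 < Sp := lt_of_lt_of_le hSqpos hSpSq
    -- key double-sum inequality
    have key : ∑ a ∈ A, ∑ b ∈ B, (w a * w b) *
        ((d - b.2) * a.1 + (a.2 - d) * b.1 - c * (a.2 - b.2)) ≤ 0 := by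
      apply Finset.sum_nonpos
      intro a ha
      apply Finset.sum_nonpos
      intro b hb
      obtain ⟨haX, hda⟩ := hmemA a ha
      obtain ⟨hbX, hbd⟩ := hmemB b hb
      apply mul_nonpos_of_nonneg_of_nonpos
      · exact mul_nonneg (hw0 a haX) (hw0 b hbX)
      · linarith [hAB a haX b hbX hda hbd]
    have expand : ∑ a ∈ A, ∑ b ∈ B, (w a * w b) *
        ((d - b.2) * a.1 + (a.2 - d) * b.1 - c * (a.2 - b.2)) =
        XA * Sq + Sp * XB - c * (Sp * Q + Pt * Sq) := by
      have e1 : XA * Sq = ∑ a ∈ A, ∑ b ∈ B, (w a * a.1) * (w b * (d - b.2)) :=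
        Finset.sum_mul_sum A B _ _
      have e2 : Sp * XB = ∑ a ∈ A, ∑ b ∈ B, (w a * (a.2 - d)) * (w b * b.1) :=
        Finset.sum_mul_sum A B _ _
      have e3 : Sp * Q = ∑ a ∈ A, ∑ b ∈ B, (w a * (a.2 - d)) * (w b) :=
        Finset.sum_mul_sum A B _ _
      have e4 : Pt * Sq = ∑ a ∈ A, ∑ b ∈ B, (w a) * (w b * (d - b.2)) :=
        Finset.sum_mul_sum A B _ _
      rw [e1, e2, e3, e4]
      simp only [← Finset.sum_add_distrib, Finset.mul_sum, ← Finset.sum_sub_distrib]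
      exact Finset.sum_congr rfl fun a _ => Finset.sum_congr rfl fun b _ => by ring
    rw [expand] at key
    -- combine: XA + XB ≤ c, contradiction with z.1 > c
    have hzc : c < XA + XB := by rw [hz1']; exact hz1
    have step1 : Sq * (c * Pt - XA) ≤ Sp * (c * Pt - XA) :=
      mul_le_mul_of_nonneg_right hSpSq (by linarith)
    have step2 : Sp * XB ≤ Sp * (c * Q + (c * Pt - XA)) := by nlinarith [key, step1]
    have step3 : XB ≤ c * Q + (c * Pt - XA) := le_of_mul_le_mul_left step2 hSppos
    have hcPQ : c * Pt + c * Q = c := by rw [← mul_add, hPQ, mul_one]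
    linarith
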